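/- arXiv:1204.0167 — 2 statements merged into one kernel-verified Lean document; each statement's English description precedes it below -/
import Mathlib

section
/- Let H₀, H = H₀ + V be bounded self-adjoint operators on a separable Hilbert space with V ∈ B₂(H), and let P_n be finite-rank projections with ‖(I−P_n)H₀P_n‖₂ → 0, ‖(I−P_n)HP_n‖₂ → 0, ‖(I−P_n)V‖₂ → 0. Then for every polynomial p, Tr(p(H) − p(H₀) − Dp(H₀)·V) = lim_n Tr(P_n[p(P_nHP_n) − p(P_nH₀P_n) − Dp(P_nH₀P_n)·(P_nVP_n)]P_n). -/
/-- `T` is Hilbert–Schmidt (w.r.t. the Hilbert basis `bas`). -/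
def IsHS {𝓗 : Type*} [NormedAddCommGroup 𝓗] [InnerProductSpace ℂ 𝓗] [CompleteSpace 𝓗]
    {ι : Type*} (bas : HilbertBasis ι ℂ 𝓗) (T : 𝓗 →L[ℂ] 𝓗) : Prop :=
  Summable fun i => ‖T (bas i)‖ ^ 2

/-- The Hilbert–Schmidt norm of `T` (w.r.t. the Hilbert basis `bas`). -/
noncomputable def hsNorm {𝓗 : Type*} [NormedAddCommGroup 𝓗] [InnerProductSpace ℂ 𝓗]
    [CompleteSpace 𝓗] {ι : Type*} (bas : HilbertBasis ι ℂ 𝓗) (T : 𝓗 →L[ℂ] 𝓗) : ℝ :=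
  Real.sqrt (∑' i, ‖T (bas i)‖ ^ 2)

/-- The trace of `T` computed along the Hilbert basis `bas` (basis-independent for trace-class
operators). -/
noncomputable def traceAlong {𝓗 : Type*} [NormedAddCommGroup 𝓗] [InnerProductSpace ℂ 𝓗]
    [CompleteSpace 𝓗] {ι : Type*} (bas : HilbertBasis ι ℂ 𝓗) (T : 𝓗 →L[ℂ] 𝓗) : ℂ :=
  ∑' i, @inner ℂ _ _ (bas i) (T (bas i))

/-- The Fréchet derivative of a polynomial `p` at `H₀` applied to `V`:
for `p = ∑_r c_r λ^r`, `Dp(H₀)·V = ∑_r c_r ∑_{j<r} H₀^{r−j−1} V H₀^j`. -/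
noncomputable def polyDeriv {𝓗 : Type*} [NormedAddCommGroup 𝓗] [InnerProductSpace ℂ 𝓗]
    [CompleteSpace 𝓗] (p : Polynomial ℂ) (H₀ V : 𝓗 →L[ℂ] 𝓗) : 𝓗 →L[ℂ] 𝓗 :=
  ∑ r ∈ p.support, p.coeff r • ∑ j ∈ Finset.range r, H₀ ^ (r - j - 1) * V * H₀ ^ j

set_option linter.unusedSectionVars false



namespace Stmt17Aux

open ContinuousLinearMap Filter

variable {𝓗 : Type*} [NormedAddCommGroup 𝓗] [InnerProductSpace ℂ 𝓗] [CompleteSpace 𝓗]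
  {ι : Type*} (bas : HilbertBasis ι ℂ 𝓗)

local notation "⟪" x ", " y "⟫" => @inner ℂ _ _ x y

private lemma rpow_toReal_two (y : ℝ) : y ^ (2 : ENNReal).toReal = y ^ 2 := by
  rw [show (2 : ENNReal).toReal = ((2 : ℕ) : ℝ) by norm_num, Real.rpow_natCast]

lemma parseval (x : 𝓗) : HasSum (fun j : ι => ‖⟪bas j, x⟫‖ ^ 2) (‖x‖ ^ 2) := by
  have hs : Summable fun j : ι => ‖bas.repr x j‖ ^ (2 : ENNReal).toReal :=
    (memℓp_gen_iff (by norm_num)).1 (lp.memℓp (bas.repr x))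
  have hnorm : ‖bas.repr x‖ ^ (2 : ENNReal).toReal
      = ∑' j, ‖bas.repr x j‖ ^ (2 : ENNReal).toReal := lp.norm_rpow_eq_tsum (by norm_num) _
  simp only [rpow_toReal_two] at hs hnorm
  have h3 : (fun j : ι => ‖bas.repr x j‖ ^ 2) = fun j => ‖⟪bas j, x⟫‖ ^ 2 := by
    funext j; rw [bas.repr_apply_apply]
  rw [← h3]
  refine (Summable.hasSum_iff hs).mpr ?_
  rw [← hnorm, LinearIsometryEquiv.norm_map]

lemma isHS_iff_memℓp {T : 𝓗 →L[ℂ] 𝓗} :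
    IsHS bas T ↔ Memℓp (fun i => T (bas i)) 2 := by
  rw [memℓp_gen_iff (by norm_num)]
  unfold IsHS
  simp only [rpow_toReal_two]

noncomputable def hsVec (T : 𝓗 →L[ℂ] 𝓗) (hT : IsHS bas T) : lp (fun _ : ι => 𝓗) 2 :=
  ⟨fun i => T (bas i), (isHS_iff_memℓp bas).1 hT⟩

@[simp] lemma hsVec_apply (T : 𝓗 →L[ℂ] 𝓗) (hT : IsHS bas T) (i : ι) :
    hsVec bas T hT i = T (bas i) := rfl

lemma IsHS.sub {S T : 𝓗 →L[ℂ] 𝓗} (hS : IsHS bas S) (hT : IsHS bas T) :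
    IsHS bas (S - T) := by
  rw [isHS_iff_memℓp] at *
  have h := hS.sub hT
  have heq : (fun i => (S - T) (bas i))
      = (fun i => S (bas i)) - (fun i => T (bas i)) := by
    funext i; simp [ContinuousLinearMap.sub_apply]
  rw [heq]; exact h

lemma IsHS.add {S T : 𝓗 →L[ℂ] 𝓗} (hS : IsHS bas S) (hT : IsHS bas T) :
    IsHS bas (S + T) := by
  rw [isHS_iff_memℓp] at *
  have h := hS.add hT
  have heq : (fun i => (S + T) (bas i))
      = (fun i => S (bas i)) + (fun i => T (bas i)) := by
    funext i; simp [ContinuousLinearMap.add_apply]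
  rw [heq]; exact h

lemma isHS_zero : IsHS bas (0 : 𝓗 →L[ℂ] 𝓗) := by
  unfold IsHS
  simpa using summable_zero

lemma IsHS.neg {T : 𝓗 →L[ℂ] 𝓗} (hT : IsHS bas T) : IsHS bas (-T) := by
  unfold IsHS at *
  simpa using hT

lemma hsVec_sub {S T : 𝓗 →L[ℂ] 𝓗} (hS : IsHS bas S) (hT : IsHS bas T) :
    hsVec bas (S - T) (IsHS.sub bas hS hT) = hsVec bas S hS - hsVec bas T hT := by
  apply Subtype.ext
  rw [lp.coeFn_sub]
  funext i
  simp [ContinuousLinearMap.sub_apply]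

lemma hsVec_add {S T : 𝓗 →L[ℂ] 𝓗} (hS : IsHS bas S) (hT : IsHS bas T) :
    hsVec bas (S + T) (IsHS.add bas hS hT) = hsVec bas S hS + hsVec bas T hT := by
  apply Subtype.ext
  rw [lp.coeFn_add]
  funext i
  simp [ContinuousLinearMap.add_apply]

lemma hsNorm_eq (T : 𝓗 →L[ℂ] 𝓗) (hT : IsHS bas T) :
    hsNorm bas T = ‖hsVec bas T hT‖ := by
  have h : ‖hsVec bas T hT‖ ^ (2 : ENNReal).toReal
      = ∑' i, ‖hsVec bas T hT i‖ ^ (2 : ENNReal).toReal := lp.norm_rpow_eq_tsum (by norm_num) _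
  simp only [rpow_toReal_two] at h
  have h2 : ∑' i, ‖T (bas i)‖ ^ 2 = ‖hsVec bas T hT‖ ^ 2 := by
    rw [h]; rfl
  rw [hsNorm, h2, Real.sqrt_sq (norm_nonneg _)]

lemma hsNorm_nonneg (T : 𝓗 →L[ℂ] 𝓗) : 0 ≤ hsNorm bas T := Real.sqrt_nonneg _

lemma hsNorm_zero : hsNorm bas (0 : 𝓗 →L[ℂ] 𝓗) = 0 := by
  unfold hsNorm; simp

lemma hsNorm_neg (T : 𝓗 →L[ℂ] 𝓗) : hsNorm bas (-T) = hsNorm bas T := by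
  unfold hsNorm
  congr 1
  apply tsum_congr
  intro i
  simp

lemma hsNorm_add_le {S T : 𝓗 →L[ℂ] 𝓗} (hS : IsHS bas S) (hT : IsHS bas T) :
    hsNorm bas (S + T) ≤ hsNorm bas S + hsNorm bas T := by
  rw [hsNorm_eq bas S hS, hsNorm_eq bas T hT, hsNorm_eq bas (S + T) (IsHS.add bas hS hT),
    hsVec_add]
  exact norm_add_le _ _


lemma IsHS.mul_left {T : 𝓗 →L[ℂ] 𝓗} (hT : IsHS bas T) (S : 𝓗 →L[ℂ] 𝓗) :
    IsHS bas (S * T) := by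
  refine Summable.of_nonneg_of_le (fun i => by positivity) (fun i => ?_)
    (hT.mul_left (‖S‖ ^ 2))
  calc ‖(S * T) (bas i)‖ ^ 2 = ‖S (T (bas i))‖ ^ 2 := by rw [ContinuousLinearMap.mul_apply]
    _ ≤ (‖S‖ * ‖T (bas i)‖) ^ 2 := by
        have := S.le_opNorm (T (bas i))
        exact pow_le_pow_left₀ (norm_nonneg _) this 2
    _ = ‖S‖ ^ 2 * ‖T (bas i)‖ ^ 2 := by ring

lemma hsNorm_mul_left_le (S : 𝓗 →L[ℂ] 𝓗) {T : 𝓗 →L[ℂ] 𝓗} (hT : IsHS bas T) :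
    hsNorm bas (S * T) ≤ ‖S‖ * hsNorm bas T := by
  unfold hsNorm
  have h1 : ∑' i, ‖(S * T) (bas i)‖ ^ 2 ≤ ∑' i, ‖S‖ ^ 2 * ‖T (bas i)‖ ^ 2 := by
    refine Summable.tsum_le_tsum (fun i => ?_) (IsHS.mul_left bas hT S) (hT.mul_left _)
    calc ‖(S * T) (bas i)‖ ^ 2 = ‖S (T (bas i))‖ ^ 2 := by rw [ContinuousLinearMap.mul_apply]
      _ ≤ (‖S‖ * ‖T (bas i)‖) ^ 2 :=
          pow_le_pow_left₀ (norm_nonneg _) (S.le_opNorm (T (bas i))) 2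
      _ = ‖S‖ ^ 2 * ‖T (bas i)‖ ^ 2 := by ring
  calc Real.sqrt (∑' i, ‖(S * T) (bas i)‖ ^ 2)
      ≤ Real.sqrt (∑' i, ‖S‖ ^ 2 * ‖T (bas i)‖ ^ 2) := Real.sqrt_le_sqrt h1
    _ = Real.sqrt (‖S‖ ^ 2 * ∑' i, ‖T (bas i)‖ ^ 2) := by rw [tsum_mul_left]
    _ = ‖S‖ * Real.sqrt (∑' i, ‖T (bas i)‖ ^ 2) := by
        rw [Real.sqrt_mul (sq_nonneg _), Real.sqrt_sq (norm_nonneg _)]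

lemma isHS_star_and_norm {T : 𝓗 →L[ℂ] 𝓗} (hT : IsHS bas T) :
    IsHS bas (star T) ∧ hsNorm bas (star T) = hsNorm bas T := by
  have hstar : ∀ (i j : ι), ‖⟪bas j, T (bas i)⟫‖ = ‖⟪bas i, (star T) (bas j)⟫‖ := by
    intro i j
    rw [ContinuousLinearMap.star_eq_adjoint, ← ContinuousLinearMap.adjoint_inner_left]
    exact norm_inner_symm _ _
  have hrow : ∀ i, HasSum (fun j => ‖⟪bas j, T (bas i)⟫‖ ^ 2) (‖T (bas i)‖ ^ 2) :=
    fun i => parseval bas _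
  have hcol : ∀ j, HasSum (fun i => ‖⟪bas j, T (bas i)⟫‖ ^ 2) (‖(star T) (bas j)‖ ^ 2) := by
    intro j
    have h := parseval bas ((star T) (bas j))
    have heq : (fun i => ‖⟪bas j, T (bas i)⟫‖ ^ 2)
        = fun i => ‖⟪bas i, (star T) (bas j)⟫‖ ^ 2 := by
      funext i; rw [hstar i j]
    rw [heq]; exact h
  have hFnn : 0 ≤ fun q : ι × ι => ‖⟪bas q.2, T (bas q.1)⟫‖ ^ 2 := fun q => by positivity
  have hFs : Summable (fun q : ι × ι => ‖⟪bas q.2, T (bas q.1)⟫‖ ^ 2) := by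
    rw [summable_prod_of_nonneg hFnn]
    constructor
    · exact fun i => (hrow i).summable
    · have heq : (fun i => ∑' j, ‖⟪bas j, T (bas i)⟫‖ ^ 2) = fun i => ‖T (bas i)‖ ^ 2 := by
        funext i; exact (hrow i).tsum_eq
      exact heq ▸ hT
  have hFswap : Summable (fun q : ι × ι =>
      (fun r : ι × ι => ‖⟪bas r.2, T (bas r.1)⟫‖ ^ 2) q.swap) := hFs.prod_symm
  have hswapnn : 0 ≤ fun q : ι × ι =>
      (fun r : ι × ι => ‖⟪bas r.2, T (bas r.1)⟫‖ ^ 2) q.swap := fun q => by positivity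
  have hcolsum : Summable fun j => ∑' i, ‖⟪bas j, T (bas i)⟫‖ ^ 2 := by
    have h := ((summable_prod_of_nonneg hswapnn).1 hFswap).2
    exact h
  have hstarHS : IsHS bas (star T) := by
    have heq : (fun j => ∑' i, ‖⟪bas j, T (bas i)⟫‖ ^ 2)
        = fun j => ‖(star T) (bas j)‖ ^ 2 := by
      funext j; exact (hcol j).tsum_eq
    rw [heq] at hcolsum; exact hcolsum
  refine ⟨hstarHS, ?_⟩
  unfold hsNorm
  congr 1
  have e1 : ∑' i, ‖T (bas i)‖ ^ 2
      = ∑' (q : ι × ι), ‖⟪bas q.2, T (bas q.1)⟫‖ ^ 2 := by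
    rw [Summable.tsum_prod' hFs fun i => (hrow i).summable]
    exact (tsum_congr fun i => ((hrow i).tsum_eq).symm)
  have e2 : ∑' j, ‖(star T) (bas j)‖ ^ 2
      = ∑' (q : ι × ι), (fun r : ι × ι => ‖⟪bas r.2, T (bas r.1)⟫‖ ^ 2) q.swap := by
    rw [Summable.tsum_prod' hFswap fun j => (hcol j).summable]
    exact (tsum_congr fun j => ((hcol j).tsum_eq).symm)
  rw [e1, e2]
  have := (Equiv.prodComm ι ι).tsum_eq (fun r : ι × ι => ‖⟪bas r.2, T (bas r.1)⟫‖ ^ 2)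
  rw [← this]
  apply tsum_congr
  intro q
  rfl

lemma isHS_star {T : 𝓗 →L[ℂ] 𝓗} (hT : IsHS bas T) : IsHS bas (star T) :=
  (isHS_star_and_norm bas hT).1

lemma hsNorm_star {T : 𝓗 →L[ℂ] 𝓗} (hT : IsHS bas T) :
    hsNorm bas (star T) = hsNorm bas T :=
  (isHS_star_and_norm bas hT).2

lemma IsHS.mul_right {T : 𝓗 →L[ℂ] 𝓗} (hT : IsHS bas T) (S : 𝓗 →L[ℂ] 𝓗) :
    IsHS bas (T * S) := by
  have h1 : star (star S * star T) = T * S := by simp [star_mul]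
  have h2 : IsHS bas (star S * star T) := IsHS.mul_left bas (isHS_star bas hT) (star S)
  have := isHS_star bas h2
  rwa [h1] at this

lemma hsNorm_mul_right_le {T : 𝓗 →L[ℂ] 𝓗} (hT : IsHS bas T) (S : 𝓗 →L[ℂ] 𝓗) :
    hsNorm bas (T * S) ≤ hsNorm bas T * ‖S‖ := by
  have h1 : star (T * S) = star S * star T := by simp [star_mul]
  have h2 : hsNorm bas (T * S) = hsNorm bas (star S * star T) := by
    rw [← h1, hsNorm_star bas (IsHS.mul_right bas hT S)]
  rw [h2]
  calc hsNorm bas (star S * star T) ≤ ‖star S‖ * hsNorm bas (star T) :=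
        hsNorm_mul_left_le bas (star S) (isHS_star bas hT)
    _ = hsNorm bas T * ‖S‖ := by
        rw [hsNorm_star bas hT, norm_star]; ring

lemma isHS_finset_sum {σ : Type*} (s : Finset σ) (f : σ → (𝓗 →L[ℂ] 𝓗))
    (h : ∀ x ∈ s, IsHS bas (f x)) : IsHS bas (∑ x ∈ s, f x) := by
  classical
  induction s using Finset.cons_induction with
  | empty => simpa using isHS_zero bas
  | cons a s ha ih =>
    rw [Finset.sum_cons]
    exact IsHS.add bas (h a (Finset.mem_cons_self a s))
      (ih fun x hx => h x (Finset.mem_cons_of_mem hx))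

lemma norm_proj_le_one {P : 𝓗 →L[ℂ] 𝓗} (h1 : IsIdempotentElem P) (h2 : IsSelfAdjoint P) :
    ‖P‖ ≤ 1 := by
  have hadj : ContinuousLinearMap.adjoint P = P := ContinuousLinearMap.isSelfAdjoint_iff'.1 h2
  refine ContinuousLinearMap.opNorm_le_bound _ zero_le_one (fun x => ?_)
  rw [one_mul]
  by_cases h : P x = 0
  · rw [h]; simpa using norm_nonneg x
  have key : ⟪P x, P x⟫ = ⟪x, P x⟫ := by
    have e1 := ContinuousLinearMap.adjoint_inner_left P (P x) x
    rw [hadj] at e1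
    have e2 : P (P x) = P x := by
      have h' : (P * P) x = P x := by rw [h1.eq]
      exact h'
    rw [e2] at e1
    exact e1
  have hsq : ‖P x‖ ^ 2 ≤ ‖P x‖ * ‖x‖ := by
    have h1' : (‖P x‖ : ℝ) ^ 2 = ‖⟪P x, P x⟫‖ := by
      rw [inner_self_eq_norm_sq_to_K (𝕜 := ℂ)]
      simp
    rw [h1', key]
    calc ‖⟪x, P x⟫‖ ≤ ‖x‖ * ‖P x‖ := norm_inner_le_norm _ _
      _ = ‖P x‖ * ‖x‖ := mul_comm _ _
  have hpos : 0 < ‖P x‖ := norm_pos_iff.mpr h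
  nlinarith

lemma isHS_proj (Pn : 𝓗 →L[ℂ] 𝓗) (hP : IsIdempotentElem Pn) (hPsa : IsSelfAdjoint Pn)
    (hfd : FiniteDimensional ℂ (LinearMap.range (Pn : 𝓗 →ₗ[ℂ] 𝓗))) : IsHS bas Pn := by
  haveI := hfd
  have hadj : ContinuousLinearMap.adjoint Pn = Pn := ContinuousLinearMap.isSelfAdjoint_iff'.1 hPsa
  set K := LinearMap.range (Pn : 𝓗 →ₗ[ℂ] 𝓗) with hK
  let w : OrthonormalBasis (Fin (Module.finrank ℂ K)) ℂ K := stdOrthonormalBasis ℂ K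
  have hfix : ∀ m, Pn ((w m : K) : 𝓗) = ((w m : K) : 𝓗) := by
    intro m
    obtain ⟨u, hu⟩ := (w m : K).2
    rw [← hu]
    calc Pn (Pn u) = (Pn * Pn) u := rfl
      _ = Pn u := by rw [hP.eq]
  have key : ∀ i, ‖Pn (bas i)‖ ^ 2 = ∑ m, ‖⟪((w m : K) : 𝓗), bas i⟫‖ ^ 2 := by
    intro i
    have hmem : Pn (bas i) ∈ K := LinearMap.mem_range_self _ _
    have hv : ‖Pn (bas i)‖ = ‖(⟨Pn (bas i), hmem⟩ : K)‖ := rfl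
    have hfinp : ‖(⟨Pn (bas i), hmem⟩ : K)‖ ^ 2
        = ∑ m, ‖⟪w m, (⟨Pn (bas i), hmem⟩ : K)⟫‖ ^ 2 := by
      have hrepr := w.repr.norm_map (⟨Pn (bas i), hmem⟩ : K)
      rw [← hrepr, EuclideanSpace.norm_eq, Real.sq_sqrt (by positivity)]
      refine Finset.sum_congr rfl fun m _ => ?_
      rw [w.repr_apply_apply]
    rw [hv, hfinp]
    refine Finset.sum_congr rfl fun m _ => ?_
    have hco : ⟪w m, (⟨Pn (bas i), hmem⟩ : K)⟫ = ⟪((w m : K) : 𝓗), Pn (bas i)⟫ := rfl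
    rw [hco]
    have h4 := ContinuousLinearMap.adjoint_inner_left Pn (bas i) ((w m : K) : 𝓗)
    rw [hadj, hfix m] at h4
    rw [← h4]
  have hsum : Summable fun i => ∑ m, ‖⟪((w m : K) : 𝓗), bas i⟫‖ ^ 2 := by
    refine summable_sum fun m _ => ?_
    have h := (parseval bas (((w m : K) : 𝓗))).summable
    refine h.congr fun i => ?_
    rw [norm_inner_symm]
  unfold IsHS
  refine hsum.congr fun i => ?_
  rw [key i]

lemma summable_inner_hs {S T : 𝓗 →L[ℂ] 𝓗} (hS' : IsHS bas (star S)) (hT : IsHS bas T) :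
    Summable fun i => ⟪bas i, (S * T) (bas i)⟫ := by
  have h := lp.summable_inner (𝕜 := ℂ) (hsVec bas (star S) hS') (hsVec bas T hT)
  refine h.congr fun i => ?_
  rw [hsVec_apply, hsVec_apply, ContinuousLinearMap.mul_apply,
    ContinuousLinearMap.star_eq_adjoint, ContinuousLinearMap.adjoint_inner_left]

lemma traceAlong_mul {S T : 𝓗 →L[ℂ] 𝓗} (hS' : IsHS bas (star S)) (hT : IsHS bas T) :
    traceAlong bas (S * T) = ⟪hsVec bas (star S) hS', hsVec bas T hT⟫ := by
  rw [traceAlong, lp.inner_eq_tsum]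
  refine tsum_congr fun i => ?_
  rw [hsVec_apply, hsVec_apply, ContinuousLinearMap.mul_apply,
    ContinuousLinearMap.star_eq_adjoint, ContinuousLinearMap.adjoint_inner_left]

lemma traceAlong_sum {σ : Type*} (s : Finset σ) (c : σ → ℂ) (S T : σ → (𝓗 →L[ℂ] 𝓗))
    (hS' : ∀ x ∈ s, IsHS bas (star (S x))) (hT : ∀ x ∈ s, IsHS bas (T x)) :
    traceAlong bas (∑ x ∈ s, c x • (S x * T x))
      = ∑ x ∈ s, c x * traceAlong bas (S x * T x) := by
  classical
  rw [traceAlong]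
  have hpt : ∀ i : ι, ⟪bas i, (∑ x ∈ s, c x • (S x * T x)) (bas i)⟫
      = ∑ x ∈ s, c x * ⟪bas i, (S x * T x) (bas i)⟫ := by
    intro i
    rw [ContinuousLinearMap.sum_apply, inner_sum]
    refine Finset.sum_congr rfl fun x _ => ?_
    rw [ContinuousLinearMap.smul_apply, inner_smul_right]
  calc ∑' i, ⟪bas i, (∑ x ∈ s, c x • (S x * T x)) (bas i)⟫
      = ∑' i, ∑ x ∈ s, c x * ⟪bas i, (S x * T x) (bas i)⟫ := tsum_congr hpt
    _ = ∑ x ∈ s, ∑' i, c x * ⟪bas i, (S x * T x) (bas i)⟫ := by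
        refine Summable.tsum_finsetSum fun x hx => ?_
        exact (summable_inner_hs bas (hS' x hx) (hT x hx)).mul_left _
    _ = ∑ x ∈ s, c x * traceAlong bas (S x * T x) := by
        refine Finset.sum_congr rfl fun x _ => ?_
        rw [traceAlong, tsum_mul_left]

/-- Convergence to zero in Hilbert–Schmidt norm. -/
def T0 (E : ℕ → (𝓗 →L[ℂ] 𝓗)) : Prop :=
  Filter.Tendsto (fun n => hsNorm bas (E n)) Filter.atTop (nhds 0)

lemma T0_congr {E F : ℕ → (𝓗 →L[ℂ] 𝓗)} (h : ∀ n, E n = F n) (hE : T0 bas E) : T0 bas F :=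
  hE.congr fun n => by rw [h n]

lemma T0_add {E F : ℕ → (𝓗 →L[ℂ] 𝓗)} (hE : ∀ n, IsHS bas (E n)) (hF : ∀ n, IsHS bas (F n))
    (tE : T0 bas E) (tF : T0 bas F) : T0 bas (fun n => E n + F n) := by
  refine squeeze_zero (fun n => hsNorm_nonneg bas _)
    (fun n => hsNorm_add_le bas (hE n) (hF n)) ?_
  simpa using tE.add tF

lemma T0_neg {E : ℕ → (𝓗 →L[ℂ] 𝓗)} (tE : T0 bas E) : T0 bas (fun n => -(E n)) :=
  tE.congr fun n => (hsNorm_neg bas (E n)).symm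

lemma T0_star {E : ℕ → (𝓗 →L[ℂ] 𝓗)} (hE : ∀ n, IsHS bas (E n)) (tE : T0 bas E) :
    T0 bas (fun n => star (E n)) :=
  tE.congr fun n => (hsNorm_star bas (hE n)).symm

lemma T0_mul_left {E : ℕ → (𝓗 →L[ℂ] 𝓗)} (C : ℕ → (𝓗 →L[ℂ] 𝓗)) (M : ℝ)
    (hC : ∀ n, ‖C n‖ ≤ M) (hE : ∀ n, IsHS bas (E n)) (tE : T0 bas E) :
    T0 bas (fun n => C n * E n) := by
  refine squeeze_zero (g := fun n => M * hsNorm bas (E n)) (fun n => hsNorm_nonneg bas _)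
    (fun n => ?_) ?_
  · exact le_trans (hsNorm_mul_left_le bas (C n) (hE n))
      (mul_le_mul_of_nonneg_right (hC n) (hsNorm_nonneg bas _))
  · simpa using tE.const_mul M

lemma T0_mul_right {E : ℕ → (𝓗 →L[ℂ] 𝓗)} (C : ℕ → (𝓗 →L[ℂ] 𝓗)) (M : ℝ)
    (hC : ∀ n, ‖C n‖ ≤ M) (hE : ∀ n, IsHS bas (E n)) (tE : T0 bas E) :
    T0 bas (fun n => E n * C n) := by
  refine squeeze_zero (g := fun n => hsNorm bas (E n) * M) (fun n => hsNorm_nonneg bas _)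
    (fun n => ?_) ?_
  · refine le_trans (hsNorm_mul_right_le bas (hE n) (C n)) ?_
    exact mul_le_mul_of_nonneg_left (hC n) (hsNorm_nonneg bas _)
  · have := tE.mul_const M
    simpa using this

lemma T0_sum {σ : Type*} (s : Finset σ) (E : σ → ℕ → (𝓗 →L[ℂ] 𝓗))
    (hE : ∀ x ∈ s, ∀ n, IsHS bas (E x n)) (h : ∀ x ∈ s, T0 bas (E x)) :
    T0 bas (fun n => ∑ x ∈ s, E x n) := by
  classical
  induction s using Finset.cons_induction with
  | empty =>
    have : T0 bas (fun _ => (0 : 𝓗 →L[ℂ] 𝓗)) := by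
      unfold T0
      have : (fun _ : ℕ => hsNorm bas (0 : 𝓗 →L[ℂ] 𝓗)) = fun _ => (0 : ℝ) := by
        funext n; exact hsNorm_zero bas
      rw [this]; exact tendsto_const_nhds
    exact T0_congr bas (fun n => by simp) this
  | cons a s ha ih =>
    have h1 : T0 bas (fun n => E a n + ∑ x ∈ s, E x n) := by
      refine T0_add bas (fun n => hE a (Finset.mem_cons_self a s) n)
        (fun n => isHS_finset_sum bas s _ fun x hx => hE x (Finset.mem_cons_of_mem hx) n)
        (h a (Finset.mem_cons_self a s))
        (ih (fun x hx => hE x (Finset.mem_cons_of_mem hx))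
          (fun x hx => h x (Finset.mem_cons_of_mem hx)))
    exact T0_congr bas (fun n => by rw [Finset.sum_cons]) h1

lemma tendsto_hsVec {E : ℕ → (𝓗 →L[ℂ] 𝓗)} {G : 𝓗 →L[ℂ] 𝓗}
    (hE : ∀ n, IsHS bas (E n)) (hG : IsHS bas G) (t : T0 bas (fun n => E n - G)) :
    Filter.Tendsto (fun n => hsVec bas (E n) (hE n)) Filter.atTop (nhds (hsVec bas G hG)) := by
  rw [tendsto_iff_norm_sub_tendsto_zero]
  refine t.congr fun n => ?_
  rw [hsNorm_eq bas (E n - G) (IsHS.sub bas (hE n) hG), hsVec_sub bas (hE n) hG]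

lemma tendsto_trace_mul {Sq Tq : ℕ → (𝓗 →L[ℂ] 𝓗)} {S T : 𝓗 →L[ℂ] 𝓗}
    (hSq : ∀ n, IsHS bas (Sq n)) (hTq : ∀ n, IsHS bas (Tq n))
    (hS : IsHS bas S) (hT : IsHS bas T)
    (tS : T0 bas (fun n => Sq n - S)) (tT : T0 bas (fun n => Tq n - T)) :
    Filter.Tendsto (fun n => traceAlong bas (Sq n * Tq n)) Filter.atTop
      (nhds (traceAlong bas (S * T))) := by
  have hSq' : ∀ n, IsHS bas (star (Sq n)) := fun n => isHS_star bas (hSq n)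
  have hS' : IsHS bas (star S) := isHS_star bas hS
  have tS' : T0 bas (fun n => star (Sq n) - star S) := by
    have h := T0_star bas (fun n => IsHS.sub bas (hSq n) hS) tS
    exact T0_congr bas (fun n => by rw [star_sub]) h
  have h1 : Filter.Tendsto (fun n => hsVec bas (star (Sq n)) (hSq' n)) Filter.atTop
      (nhds (hsVec bas (star S) hS')) := tendsto_hsVec bas hSq' hS' tS'
  have h2 : Filter.Tendsto (fun n => hsVec bas (Tq n) (hTq n)) Filter.atTop
      (nhds (hsVec bas T hT)) := tendsto_hsVec bas hTq hT tT
  have h3 := Filter.Tendsto.inner (𝕜 := ℂ) h1 h2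
  have h4 : Filter.Tendsto (fun n => traceAlong bas (Sq n * Tq n)) Filter.atTop
      (nhds (⟪hsVec bas (star S) hS', hsVec bas T hT⟫)) := by
    refine h3.congr fun n => ?_
    exact (traceAlong_mul bas (hSq' n) (hTq n)).symm
  rwa [← traceAlong_mul bas hS' hT] at h4

/-- Telescoping identity for powers in a (noncommutative) ring. -/
lemma pow_sub_pow_eq {R : Type*} [Ring R] (a b : R) (r : ℕ) :
    a ^ r - b ^ r = ∑ j ∈ Finset.range r, a ^ (r - 1 - j) * (a - b) * b ^ j := by
  induction r with
  | zero => simp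
  | succ r ih =>
    rw [Finset.sum_range_succ]
    have h1 : ∀ j ∈ Finset.range r,
        a ^ (r + 1 - 1 - j) * (a - b) * b ^ j = a * (a ^ (r - 1 - j) * (a - b) * b ^ j) := by
      intro j hj
      rw [Finset.mem_range] at hj
      rw [← mul_assoc, ← mul_assoc, ← pow_succ']
      congr 3
      omega
    rw [Finset.sum_congr rfl h1, ← Finset.mul_sum, ← ih]
    have h2 : r + 1 - 1 - r = 0 := by omega
    rw [h2, pow_zero, one_mul, mul_sub, sub_mul, ← pow_succ', ← pow_succ']
    abel

lemma aeval_eq_sum (a : 𝓗 →L[ℂ] 𝓗) (p : Polynomial ℂ) :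
    Polynomial.aeval a p = ∑ r ∈ p.support, p.coeff r • a ^ r := by
  rw [Polynomial.aeval_def, Polynomial.eval₂_eq_sum, Polynomial.sum_def]
  exact Finset.sum_congr rfl fun r _ => (Algebra.smul_def _ _).symm

lemma keyIdentity (a b v : 𝓗 →L[ℂ] 𝓗) (hv : v = a - b) (p : Polynomial ℂ) :
    Polynomial.aeval a p - Polynomial.aeval b p - polyDeriv p b v
      = ∑ r ∈ p.support, p.coeff r • ∑ j ∈ Finset.range r,
          (a ^ (r - 1 - j) - b ^ (r - 1 - j)) * (v * b ^ j) := by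
  rw [aeval_eq_sum, aeval_eq_sum, polyDeriv, ← Finset.sum_sub_distrib, ← Finset.sum_sub_distrib]
  refine Finset.sum_congr rfl fun r _ => ?_
  rw [← smul_sub, ← smul_sub]
  congr 1
  have hd : ∑ j ∈ Finset.range r, b ^ (r - j - 1) * v * b ^ j
      = ∑ j ∈ Finset.range r, b ^ (r - 1 - j) * v * b ^ j := by
    refine Finset.sum_congr rfl fun j _ => ?_
    rw [Nat.sub_right_comm]
  rw [hd, pow_sub_pow_eq a b r, hv, ← Finset.sum_sub_distrib]
  refine Finset.sum_congr rfl fun j _ => ?_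
  noncomm_ring

lemma absorb (Pn x y vv : 𝓗 →L[ℂ] 𝓗) (hx : Pn * x = x) (hy : Pn * y = y)
    (hy' : y * Pn = y) (hv' : vv * Pn = vv) (k j : ℕ) :
    Pn * ((x ^ k - y ^ k) * (vv * y ^ j)) * Pn = (x ^ k - y ^ k) * (vv * y ^ j) := by
  have hleft : Pn * (x ^ k - y ^ k) = x ^ k - y ^ k := by
    cases k with
    | zero => simp
    | succ m =>
      rw [pow_succ', pow_succ' y m, mul_sub, ← mul_assoc, ← mul_assoc, hx, hy]
  have hright : (vv * y ^ j) * Pn = vv * y ^ j := by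
    cases j with
    | zero => rw [pow_zero, mul_one, hv']
    | succ m =>
      rw [pow_succ y m, ← mul_assoc, mul_assoc (vv * y ^ m) y Pn, hy', mul_assoc]
  rw [← mul_assoc Pn (x ^ k - y ^ k) (vv * y ^ j), hleft, mul_assoc, hright]

lemma compress (Pn Hh H₀ V : 𝓗 →L[ℂ] 𝓗) (hP : IsIdempotentElem Pn) (hV : V = Hh - H₀)
    (p : Polynomial ℂ) :
    Pn * (Polynomial.aeval (Pn * Hh * Pn) p - Polynomial.aeval (Pn * H₀ * Pn) p
        - polyDeriv p (Pn * H₀ * Pn) (Pn * V * Pn)) * Pn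
      = ∑ r ∈ p.support, p.coeff r • ∑ j ∈ Finset.range r,
          ((Pn * Hh * Pn) ^ (r - 1 - j) - (Pn * H₀ * Pn) ^ (r - 1 - j))
            * ((Pn * V * Pn) * (Pn * H₀ * Pn) ^ j) := by
  have hv : Pn * V * Pn = (Pn * Hh * Pn) - (Pn * H₀ * Pn) := by rw [hV]; noncomm_ring
  have hxabs : Pn * (Pn * Hh * Pn) = Pn * Hh * Pn := by
    rw [← mul_assoc, ← mul_assoc, hP.eq]
  have hyabs : Pn * (Pn * H₀ * Pn) = Pn * H₀ * Pn := by
    rw [← mul_assoc, ← mul_assoc, hP.eq]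
  have hyabs' : (Pn * H₀ * Pn) * Pn = Pn * H₀ * Pn := by
    rw [mul_assoc, hP.eq]
  have hvabs' : (Pn * V * Pn) * Pn = Pn * V * Pn := by
    rw [mul_assoc, hP.eq]
  rw [keyIdentity (Pn * Hh * Pn) (Pn * H₀ * Pn) (Pn * V * Pn) hv p]
  rw [Finset.mul_sum, Finset.sum_mul]
  refine Finset.sum_congr rfl fun r _ => ?_
  rw [mul_smul_comm, smul_mul_assoc]
  congr 1
  rw [Finset.mul_sum, Finset.sum_mul]
  refine Finset.sum_congr rfl fun j _ => ?_
  exact absorb Pn _ _ _ hxabs hyabs hyabs' hvabs' _ _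

lemma L1lemma (B V : 𝓗 →L[ℂ] 𝓗) (P : ℕ → (𝓗 →L[ℂ] 𝓗)) (hVHS : IsHS bas V)
    (hPfr : ∀ n, IsHS bas (P n))
    (hB3 : T0 bas (fun n => (1 - P n) * B * P n))
    (h3 : T0 bas (fun n => (1 - P n) * V))
    (hQle : ∀ n, ‖(1 : 𝓗 →L[ℂ] 𝓗) - P n‖ ≤ 2) :
    ∀ j, T0 bas (fun n => (1 - P n) * B ^ j * V) := by
  intro j
  induction j with
  | zero => exact T0_congr bas (fun n => by rw [pow_zero, mul_one]) h3
  | succ m ih =>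
    have hdecomp : ∀ n, ((1 - P n) * B * P n) * (B ^ m * V)
        + ((1 - P n) * B) * ((1 - P n) * B ^ m * V) = (1 - P n) * B ^ (m + 1) * V := by
      intro n
      rw [pow_succ' B m]
      noncomm_ring
    refine T0_congr bas hdecomp ?_
    refine T0_add bas (fun n => ?_) (fun n => ?_) ?_ ?_
    · exact IsHS.mul_right bas (IsHS.mul_left bas (hPfr n) ((1 - P n) * B)) _
    · exact IsHS.mul_left bas (IsHS.mul_left bas hVHS _) _
    · exact T0_mul_right bas (fun _ => B ^ m * V) (‖B ^ m * V‖) (fun n => le_refl _)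
        (fun n => IsHS.mul_left bas (hPfr n) _) hB3
    · refine T0_mul_left bas (fun n => (1 - P n) * B) (2 * ‖B‖) (fun n => ?_)
        (fun n => IsHS.mul_left bas hVHS _) ih
      calc ‖(1 - P n) * B‖ ≤ ‖(1 : 𝓗 →L[ℂ] 𝓗) - P n‖ * ‖B‖ := norm_mul_le _ _
        _ ≤ 2 * ‖B‖ := mul_le_mul_of_nonneg_right (hQle n) (norm_nonneg B)

lemma claimC (B V : 𝓗 →L[ℂ] 𝓗) (P : ℕ → (𝓗 →L[ℂ] 𝓗)) (hVHS : IsHS bas V)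
    (hVsa : IsSelfAdjoint V)
    (hPsa : ∀ n, IsSelfAdjoint (P n))
    (hPfr : ∀ n, IsHS bas (P n)) (hPle : ∀ n, ‖P n‖ ≤ 1)
    (hB3 : T0 bas (fun n => (1 - P n) * B * P n))
    (h3 : T0 bas (fun n => (1 - P n) * V)) :
    ∀ j, T0 bas (fun n => (P n * B * P n) ^ j * (P n * V * P n) - B ^ j * V) := by
  have hQle : ∀ n, ‖(1 : 𝓗 →L[ℂ] 𝓗) - P n‖ ≤ 2 := by
    intro n
    calc ‖(1 : 𝓗 →L[ℂ] 𝓗) - P n‖ ≤ ‖(1 : 𝓗 →L[ℂ] 𝓗)‖ + ‖P n‖ := norm_sub_le _ _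
      _ ≤ 1 + 1 := by
          refine add_le_add ?_ (hPle n)
          simpa [ContinuousLinearMap.one_def] using
            (ContinuousLinearMap.norm_id_le (E := 𝓗))
      _ = 2 := by norm_num
  have hQsa : ∀ n, IsSelfAdjoint ((1 : 𝓗 →L[ℂ] 𝓗) - P n) :=
    fun n => (IsSelfAdjoint.one _).sub (hPsa n)
  have hL1 := L1lemma bas B V P hVHS hPfr hB3 h3 hQle
  have hVnHS : ∀ n, IsHS bas (P n * V * P n) :=
    fun n => IsHS.mul_right bas (IsHS.mul_left bas hVHS (P n)) (P n)
  have hQVHS : ∀ n, IsHS bas ((1 - P n) * V) := fun n => IsHS.mul_left bas hVHS _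
  have tVQ : T0 bas (fun n => V * (1 - P n)) := by
    have h := T0_star bas hQVHS h3
    refine T0_congr bas (fun n => ?_) h
    rw [star_mul, hVsa.star_eq, (hQsa n).star_eq]
  have hVQHS : ∀ n, IsHS bas (V * (1 - P n)) := fun n => IsHS.mul_right bas hVHS _
  have base : T0 bas (fun n => P n * V * P n - V) := by
    have hdec : ∀ n, -(P n * (V * (1 - P n))) + -((1 - P n) * V) = P n * V * P n - V := by
      intro n; noncomm_ring
    refine T0_congr bas hdec ?_
    refine T0_add bas (fun n => ?_) (fun n => ?_) ?_ ?_
    · exact IsHS.neg bas (IsHS.mul_left bas (hVQHS n) _)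
    · exact IsHS.neg bas (hQVHS n)
    · exact T0_neg bas (T0_mul_left bas P 1 hPle hVQHS tVQ)
    · exact T0_neg bas h3
  have normPBP : ∀ (X : 𝓗 →L[ℂ] 𝓗) n, ‖P n * X * P n‖ ≤ ‖X‖ := by
    intro X n
    calc ‖P n * X * P n‖ ≤ ‖P n * X‖ * ‖P n‖ := norm_mul_le _ _
      _ ≤ (‖P n‖ * ‖X‖) * ‖P n‖ := by
          refine mul_le_mul_of_nonneg_right (norm_mul_le _ _) (norm_nonneg _)
      _ ≤ (1 * ‖X‖) * 1 := by
          refine mul_le_mul (mul_le_mul_of_nonneg_right (hPle n) (norm_nonneg _)) (hPle n)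
            (norm_nonneg _) (by positivity)
      _ = ‖X‖ := by ring
  intro j
  induction j with
  | zero => exact T0_congr bas (fun n => by rw [pow_zero, pow_zero, one_mul, one_mul]) base
  | succ m ih =>
    have hdec : ∀ n,
        (P n * B * P n) * ((P n * B * P n) ^ m * (P n * V * P n) - B ^ m * V)
          + -((P n * B) * ((1 - P n) * B ^ m * V))
          + -((1 - P n) * B ^ (m + 1) * V)
        = (P n * B * P n) ^ (m + 1) * (P n * V * P n) - B ^ (m + 1) * V := by
      intro n
      rw [pow_succ' B m, pow_succ' (P n * B * P n) m]
      noncomm_ring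
    refine T0_congr bas hdec ?_
    have hIH_HS : ∀ n, IsHS bas ((P n * B * P n) ^ m * (P n * V * P n) - B ^ m * V) :=
      fun n => IsHS.sub bas (IsHS.mul_left bas (hVnHS n) _) (IsHS.mul_left bas hVHS _)
    refine T0_add bas (fun n => ?_) (fun n => ?_) ?_ ?_
    · refine IsHS.add bas (IsHS.mul_left bas (hIH_HS n) _) ?_
      exact IsHS.neg bas (IsHS.mul_left bas (IsHS.mul_left bas hVHS _) _)
    · exact IsHS.neg bas (IsHS.mul_left bas hVHS _)
    · refine T0_add bas (fun n => IsHS.mul_left bas (hIH_HS n) _) (fun n => ?_) ?_ ?_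
      · exact IsHS.neg bas (IsHS.mul_left bas (IsHS.mul_left bas hVHS _) _)
      · exact T0_mul_left bas (fun n => P n * B * P n) ‖B‖ (normPBP B) hIH_HS ih
      · refine T0_neg bas ?_
        refine T0_mul_left bas (fun n => P n * B) ‖B‖ (fun n => ?_)
          (fun n => IsHS.mul_left bas hVHS _) (hL1 m)
        calc ‖P n * B‖ ≤ ‖P n‖ * ‖B‖ := norm_mul_le _ _
          _ ≤ 1 * ‖B‖ := mul_le_mul_of_nonneg_right (hPle n) (norm_nonneg _)
          _ = ‖B‖ := one_mul _
    · exact T0_neg bas (hL1 (m + 1))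
lemma norm_pow_le01 (X : 𝓗 →L[ℂ] 𝓗) (c : ℝ) (hX : ‖X‖ ≤ c) :
    ∀ i, ‖X ^ i‖ ≤ c ^ i := by
  have hc : 0 ≤ c := le_trans (norm_nonneg X) hX
  intro i
  induction i with
  | zero =>
    rw [pow_zero, pow_zero, ContinuousLinearMap.one_def]
    exact ContinuousLinearMap.norm_id_le
  | succ m ihm =>
    rw [pow_succ, pow_succ]
    calc ‖X ^ m * X‖ ≤ ‖X ^ m‖ * ‖X‖ := norm_mul_le _ _
      _ ≤ c ^ m * c := mul_le_mul ihm hX (norm_nonneg _) (pow_nonneg hc m)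

end Stmt17Aux

open Stmt17Aux Filter


/-- Reduction to finite dimensions for polynomials: for bounded self-adjoint
`H₀, H = H₀ + V` with `V` Hilbert–Schmidt, and finite-rank orthogonal projections `Pₙ` with
`‖(I−Pₙ)H₀Pₙ‖₂ → 0`, `‖(I−Pₙ)HPₙ‖₂ → 0`, `‖(I−Pₙ)V‖₂ → 0`, one has for every polynomial `p`:
`Tr(p(H) − p(H₀) − Dp(H₀)·V)
  = limₙ Tr(Pₙ[p(PₙHPₙ) − p(PₙH₀Pₙ) − Dp(PₙH₀Pₙ)·(PₙVPₙ)]Pₙ)`. -/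
theorem stmt_17 {𝓗 : Type*} [NormedAddCommGroup 𝓗] [InnerProductSpace ℂ 𝓗] [CompleteSpace 𝓗]
    {ι : Type*} (bas : HilbertBasis ι ℂ 𝓗)
    (H₀ V H : 𝓗 →L[ℂ] 𝓗) (hH₀ : IsSelfAdjoint H₀) (hH : IsSelfAdjoint H)
    (hV : V = H - H₀) (hVHS : IsHS bas V)
    (P : ℕ → (𝓗 →L[ℂ] 𝓗))
    (hProj : ∀ n, IsIdempotentElem (P n) ∧ IsSelfAdjoint (P n) ∧
      FiniteDimensional ℂ (LinearMap.range (P n : 𝓗 →ₗ[ℂ] 𝓗)))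
    (h1 : Filter.Tendsto (fun n => hsNorm bas (((1 : 𝓗 →L[ℂ] 𝓗) - P n) * H₀ * P n))
      Filter.atTop (nhds 0))
    (h2 : Filter.Tendsto (fun n => hsNorm bas (((1 : 𝓗 →L[ℂ] 𝓗) - P n) * H * P n))
      Filter.atTop (nhds 0))
    (h3 : Filter.Tendsto (fun n => hsNorm bas (((1 : 𝓗 →L[ℂ] 𝓗) - P n) * V))
      Filter.atTop (nhds 0))
    (p : Polynomial ℂ) :
    Filter.Tendsto
      (fun n => traceAlong bas (P n *
        (Polynomial.aeval (P n * H * P n) p - Polynomial.aeval (P n * H₀ * P n) p -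
          polyDeriv p (P n * H₀ * P n) (P n * V * P n)) * P n))
      Filter.atTop
      (nhds (traceAlong bas
        (Polynomial.aeval H p - Polynomial.aeval H₀ p - polyDeriv p H₀ V))) := by
  classical
  have hPidem : ∀ n, IsIdempotentElem (P n) := fun n => (hProj n).1
  have hPsa : ∀ n, IsSelfAdjoint (P n) := fun n => (hProj n).2.1
  have hPle : ∀ n, ‖P n‖ ≤ 1 := fun n => norm_proj_le_one (hPidem n) (hPsa n)
  have hPfr : ∀ n, IsHS bas (P n) :=
    fun n => isHS_proj bas (P n) (hPidem n) (hPsa n) (hProj n).2.2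
  have hVsa : IsSelfAdjoint V := by rw [hV]; exact hH.sub hH₀
  have hVHS2 : IsHS bas (H - H₀) := by rw [← hV]; exact hVHS
  -- claims from claimC
  have cH : ∀ j, T0 bas
      (fun n => (P n * H * P n) ^ j * (P n * V * P n) - H ^ j * V) :=
    claimC bas H V P hVHS hVsa hPsa hPfr hPle h2 h3
  have cH₀ : ∀ j, T0 bas
      (fun n => (P n * H₀ * P n) ^ j * (P n * V * P n) - H₀ ^ j * V) :=
    claimC bas H₀ V P hVHS hVsa hPsa hPfr hPle h1 h3
  -- basic HS facts
  have hVnHS : ∀ n, IsHS bas (P n * V * P n) :=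
    fun n => IsHS.mul_right bas (IsHS.mul_left bas hVHS (P n)) (P n)
  have hvn : ∀ n, (P n * H * P n) - (P n * H₀ * P n) = P n * V * P n := by
    intro n; rw [hV]; noncomm_ring
  have hVnsub : ∀ n, IsHS bas ((P n * H * P n) - (P n * H₀ * P n)) := by
    intro n; rw [hvn n]; exact hVnHS n
  have hSnHS : ∀ k n, IsHS bas ((P n * H * P n) ^ k - (P n * H₀ * P n) ^ k) := by
    intro k n
    rw [pow_sub_pow_eq]
    refine isHS_finset_sum bas _ _ fun i _ => ?_
    exact IsHS.mul_right bas (IsHS.mul_left bas (hVnsub n) _) _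
  have hSHS : ∀ k, IsHS bas (H ^ k - H₀ ^ k) := by
    intro k
    rw [pow_sub_pow_eq]
    refine isHS_finset_sum bas _ _ fun i _ => ?_
    exact IsHS.mul_right bas (IsHS.mul_left bas hVHS2 _) _
  have hTnHS : ∀ j n, IsHS bas ((P n * V * P n) * (P n * H₀ * P n) ^ j) :=
    fun j n => IsHS.mul_right bas (hVnHS n) _
  have hTHS : ∀ j, IsHS bas (V * H₀ ^ j) := fun j => IsHS.mul_right bas hVHS _
  -- self-adjointness conjugation
  have conjsa : ∀ (X : 𝓗 →L[ℂ] 𝓗), IsSelfAdjoint X → ∀ n,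
      IsSelfAdjoint (P n * X * P n) := by
    intro X hX n
    have : star (P n * X * P n) = P n * X * P n := by
      simp [star_mul, hX.star_eq, (hPsa n).star_eq, mul_assoc]
    exact this
  -- convergence of the right factors
  have tT : ∀ j, T0 bas
      (fun n => (P n * V * P n) * (P n * H₀ * P n) ^ j - V * H₀ ^ j) := by
    intro j
    have hdHS : ∀ n, IsHS bas
        ((P n * H₀ * P n) ^ j * (P n * V * P n) - H₀ ^ j * V) :=
      fun n => IsHS.sub bas (IsHS.mul_left bas (hVnHS n) _) (IsHS.mul_left bas hVHS _)
    have h := T0_star bas hdHS (cH₀ j)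
    refine T0_congr bas (fun n => ?_) h
    simp only [star_sub, star_mul, star_pow, hVsa.star_eq, (hPsa n).star_eq,
      hH₀.star_eq, mul_assoc]
  have tbase : T0 bas (fun n => (P n * V * P n) - V) := by
    refine T0_congr bas (fun n => ?_) (tT 0)
    rw [pow_zero, pow_zero, mul_one, mul_one]
  -- norm bounds
  have hPBP : ∀ (X : 𝓗 →L[ℂ] 𝓗) n, ‖P n * X * P n‖ ≤ ‖X‖ := by
    intro X n
    calc ‖P n * X * P n‖ ≤ ‖P n * X‖ * ‖P n‖ := norm_mul_le _ _
      _ ≤ (‖P n‖ * ‖X‖) * ‖P n‖ :=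
          mul_le_mul_of_nonneg_right (norm_mul_le _ _) (norm_nonneg _)
      _ ≤ (1 * ‖X‖) * 1 :=
          mul_le_mul (mul_le_mul_of_nonneg_right (hPle n) (norm_nonneg _)) (hPle n)
            (norm_nonneg _) (by positivity)
      _ = ‖X‖ := by ring
  -- claim D
  have tD : ∀ m i, T0 bas (fun n =>
      (P n * H * P n) ^ m * (P n * V * P n) * (P n * H₀ * P n) ^ i
        - H ^ m * V * H₀ ^ i) := by
    intro m i
    have hdec : ∀ n,
        ((P n * H * P n) ^ m * (P n * V * P n) - H ^ m * V) * (P n * H₀ * P n) ^ i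
          + H ^ m * ((P n * V * P n) * (P n * H₀ * P n) ^ i - V * H₀ ^ i)
          + -(H ^ m * (((P n * V * P n) - V) * (P n * H₀ * P n) ^ i))
        = (P n * H * P n) ^ m * (P n * V * P n) * (P n * H₀ * P n) ^ i
            - H ^ m * V * H₀ ^ i := by
      intro n; noncomm_ring
    refine T0_congr bas hdec ?_
    have hA : ∀ n, IsHS bas
        ((P n * H * P n) ^ m * (P n * V * P n) - H ^ m * V) :=
      fun n => IsHS.sub bas (IsHS.mul_left bas (hVnHS n) _) (IsHS.mul_left bas hVHS _)
    have hB' : ∀ n, IsHS bas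
        ((P n * V * P n) * (P n * H₀ * P n) ^ i - V * H₀ ^ i) :=
      fun n => IsHS.sub bas (hTnHS i n) (hTHS i)
    have hC' : ∀ n, IsHS bas (((P n * V * P n) - V) * (P n * H₀ * P n) ^ i) :=
      fun n => IsHS.mul_right bas (IsHS.sub bas (hVnHS n) hVHS) _
    refine T0_add bas (fun n => ?_) (fun n => ?_) ?_ ?_
    · exact IsHS.add bas (IsHS.mul_right bas (hA n) _) (IsHS.mul_left bas (hB' n) _)
    · exact IsHS.neg bas (IsHS.mul_left bas (hC' n) _)
    · refine T0_add bas (fun n => IsHS.mul_right bas (hA n) _)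
        (fun n => IsHS.mul_left bas (hB' n) _) ?_ ?_
      · refine T0_mul_right bas (fun n => (P n * H₀ * P n) ^ i) (‖H₀‖ ^ i)
          (fun n => norm_pow_le01 _ _ (hPBP H₀ n) i) hA (cH m)
      · exact T0_mul_left bas (fun _ => H ^ m) ‖H ^ m‖ (fun _ => le_refl _) hB' (tT i)
    · refine T0_neg bas ?_
      refine T0_mul_left bas (fun _ => H ^ m) ‖H ^ m‖ (fun _ => le_refl _) hC' ?_
      refine T0_mul_right bas (fun n => (P n * H₀ * P n) ^ i) (‖H₀‖ ^ i)
        (fun n => norm_pow_le01 _ _ (hPBP H₀ n) i)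
        (fun n => IsHS.sub bas (hVnHS n) hVHS) tbase
  -- claim (ii)
  have tS : ∀ k, T0 bas (fun n =>
      ((P n * H * P n) ^ k - (P n * H₀ * P n) ^ k) - (H ^ k - H₀ ^ k)) := by
    intro k
    have hSd : ∀ n, ∑ i ∈ Finset.range k,
        ((P n * H * P n) ^ (k - 1 - i) * (P n * V * P n) * (P n * H₀ * P n) ^ i
          - H ^ (k - 1 - i) * V * H₀ ^ i)
        = ((P n * H * P n) ^ k - (P n * H₀ * P n) ^ k) - (H ^ k - H₀ ^ k) := by
      intro n
      rw [pow_sub_pow_eq (P n * H * P n) (P n * H₀ * P n) k, pow_sub_pow_eq H H₀ k,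
        ← Finset.sum_sub_distrib]
      refine Finset.sum_congr rfl fun i _ => ?_
      rw [hvn n, ← hV]
    refine T0_congr bas hSd ?_
    refine T0_sum bas (Finset.range k) _ (fun i _ n => ?_) (fun i _ => tD _ i)
    exact IsHS.sub bas (IsHS.mul_right bas (IsHS.mul_left bas (hVnHS n) _) _)
      (IsHS.mul_right bas (IsHS.mul_left bas hVHS _) _)
  -- rewrite the operators as sigma sums
  have hlimop : Polynomial.aeval H p - Polynomial.aeval H₀ p - polyDeriv p H₀ V
      = ∑ x ∈ p.support.sigma (fun r => Finset.range r), p.coeff x.1 •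
          ((H ^ (x.1 - 1 - x.2) - H₀ ^ (x.1 - 1 - x.2)) * (V * H₀ ^ x.2)) := by
    rw [keyIdentity H H₀ V hV p]
    have hsmul : ∀ r ∈ p.support, p.coeff r • ∑ j ∈ Finset.range r,
        ((H ^ (r - 1 - j) - H₀ ^ (r - 1 - j)) * (V * H₀ ^ j))
        = ∑ j ∈ Finset.range r, p.coeff r •
            ((H ^ (r - 1 - j) - H₀ ^ (r - 1 - j)) * (V * H₀ ^ j)) :=
      fun r _ => Finset.smul_sum
    rw [Finset.sum_congr rfl hsmul, Finset.sum_sigma']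
  have hnop : ∀ n, P n *
      (Polynomial.aeval (P n * H * P n) p - Polynomial.aeval (P n * H₀ * P n) p -
        polyDeriv p (P n * H₀ * P n) (P n * V * P n)) * P n
      = ∑ x ∈ p.support.sigma (fun r => Finset.range r), p.coeff x.1 •
          (((P n * H * P n) ^ (x.1 - 1 - x.2) - (P n * H₀ * P n) ^ (x.1 - 1 - x.2))
            * ((P n * V * P n) * (P n * H₀ * P n) ^ x.2)) := by
    intro n
    rw [compress (P n) H H₀ V (hPidem n) hV p]
    have hsmul : ∀ r ∈ p.support, p.coeff r • ∑ j ∈ Finset.range r,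
        (((P n * H * P n) ^ (r - 1 - j) - (P n * H₀ * P n) ^ (r - 1 - j))
          * ((P n * V * P n) * (P n * H₀ * P n) ^ j))
        = ∑ j ∈ Finset.range r, p.coeff r •
            (((P n * H * P n) ^ (r - 1 - j) - (P n * H₀ * P n) ^ (r - 1 - j))
              * ((P n * V * P n) * (P n * H₀ * P n) ^ j)) :=
      fun r _ => Finset.smul_sum
    rw [Finset.sum_congr rfl hsmul, Finset.sum_sigma']
  -- traces as sums
  have htr_lim : traceAlong bas
      (Polynomial.aeval H p - Polynomial.aeval H₀ p - polyDeriv p H₀ V)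
      = ∑ x ∈ p.support.sigma (fun r => Finset.range r), p.coeff x.1 *
          traceAlong bas ((H ^ (x.1 - 1 - x.2) - H₀ ^ (x.1 - 1 - x.2))
            * (V * H₀ ^ x.2)) := by
    rw [hlimop]
    exact traceAlong_sum bas _ _ _ _
      (fun x _ => isHS_star bas (hSHS _)) (fun x _ => hTHS _)
  have htr_n : ∀ n, traceAlong bas (P n *
      (Polynomial.aeval (P n * H * P n) p - Polynomial.aeval (P n * H₀ * P n) p -
        polyDeriv p (P n * H₀ * P n) (P n * V * P n)) * P n)
      = ∑ x ∈ p.support.sigma (fun r => Finset.range r), p.coeff x.1 *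
          traceAlong bas (((P n * H * P n) ^ (x.1 - 1 - x.2)
              - (P n * H₀ * P n) ^ (x.1 - 1 - x.2))
            * ((P n * V * P n) * (P n * H₀ * P n) ^ x.2)) := by
    intro n
    rw [hnop n]
    exact traceAlong_sum bas _ _ _ _
      (fun x _ => isHS_star bas (hSnHS _ n)) (fun x _ => hTnHS _ n)
  rw [htr_lim]
  refine Filter.Tendsto.congr (fun n => (htr_n n).symm) ?_
  refine tendsto_finset_sum _ fun x _ => ?_
  refine Filter.Tendsto.const_mul (p.coeff x.1) ?_
  exact tendsto_trace_mul bas (fun n => hSnHS _ n) (fun n => hTnHS _ n)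
    (hSHS _) (hTHS _) (tS _) (tT _)
end

section
/- Let H₀ be self-adjoint on a finite-dimensional space (or bounded self-adjoint) and g Lipschitz with Lipschitz constant K on an interval containing the spectra of H₀ and H₀ + sV. Then ‖g(H₀ + sV) − g(H₀)‖₂ ≤ s·K·‖V‖₂. -/
attribute [local instance] Matrix.frobeniusNormedAddCommGroup

open Matrix

lemma frob_sq {n : ℕ} (M : Matrix (Fin n) (Fin n) ℂ) :
    ‖M‖ ^ 2 = ∑ i, ∑ j, ‖M i j‖ ^ 2 := by
  rw [frobenius_norm_def]
  rw [← Real.rpow_natCast _ 2, ← Real.rpow_mul (by positivity)]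
  norm_num

lemma frob_sq_trace {n : ℕ} (M : Matrix (Fin n) (Fin n) ℂ) :
    ‖M‖ ^ 2 = (Matrix.trace (Mᴴ * M)).re := by
  rw [frob_sq, Matrix.trace]
  simp only [Matrix.diag, Matrix.mul_apply, Matrix.conjTranspose_apply]
  rw [Finset.sum_comm]
  simp only [Complex.re_sum]
  congr 1; ext i; congr 1; ext j
  rw [show (star (M j i) * M j i : ℂ) = ((Complex.normSq (M j i) : ℝ) : ℂ) by
    rw [mul_comm]; exact Complex.mul_conj _]
  simp [Complex.sq_norm]

lemma frob_unit_inv {n : ℕ} (U W M : Matrix (Fin n) (Fin n) ℂ)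
    (hU : star U * U = 1) (hW : W * star W = 1) : ‖U * M * W‖ = ‖M‖ := by
  have h2 : ‖U * M * W‖ ^ 2 = ‖M‖ ^ 2 := by
    rw [frob_sq_trace, frob_sq_trace]
    congr 1
    have : (U * M * W)ᴴ * (U * M * W) = Wᴴ * (Mᴴ * M) * W := by
      simp only [conjTranspose_mul, Matrix.mul_assoc]
      rw [← Matrix.mul_assoc Uᴴ U, show Uᴴ * U = 1 from hU, Matrix.one_mul]
    rw [this, Matrix.trace_mul_cycle, show W * Wᴴ = 1 from hW, Matrix.one_mul]
  have := congrArg Real.sqrt h2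
  rwa [Real.sqrt_sq (norm_nonneg _), Real.sqrt_sq (norm_nonneg _)] at this

lemma frob_le {n : ℕ} (A B : Matrix (Fin n) (Fin n) ℂ) (c : ℝ) (hc : 0 ≤ c)
    (h : ∀ i j, ‖A i j‖ ≤ c * ‖B i j‖) : ‖A‖ ≤ c * ‖B‖ := by
  have h2 : ‖A‖ ^ 2 ≤ (c * ‖B‖) ^ 2 := by
    rw [frob_sq, mul_pow, frob_sq, Finset.mul_sum]
    refine Finset.sum_le_sum fun i _ => ?_
    rw [Finset.mul_sum]
    refine Finset.sum_le_sum fun j _ => ?_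
    rw [← mul_pow]
    exact pow_le_pow_left₀ (norm_nonneg _) (h i j) 2
  have := Real.sqrt_le_sqrt h2
  rwa [Real.sqrt_sq (norm_nonneg _), Real.sqrt_sq (by positivity)] at this

lemma conj_left {n : ℕ} (U W X D : Matrix (Fin n) (Fin n) ℂ) (hU : U * star U = 1)
    (h : star U * X * U = D) : star U * X * W = D * (star U * W) := by
  calc star U * X * W = star U * X * ((U * star U) * W) := by rw [hU, Matrix.one_mul]
    _ = (star U * X * U) * (star U * W) := by simp only [Matrix.mul_assoc]
    _ = D * (star U * W) := by rw [h]

lemma conj_right {n : ℕ} (U W X D : Matrix (Fin n) (Fin n) ℂ) (hW : W * star W = 1)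
    (h : star W * X * W = D) : star U * X * W = (star U * W) * D := by
  calc star U * X * W = star U * ((W * star W) * X) * W := by rw [hW, Matrix.one_mul]
    _ = (star U * W) * (star W * X * W) := by simp only [Matrix.mul_assoc]
    _ = _ := by rw [h]

lemma sandwich {n : ℕ} (U D : Matrix (Fin n) (Fin n) ℂ) (hU : star U * U = 1) :
    star U * (U * D * star U) * U = D := by
  have : star U * (U * D * star U) * U = (star U * U) * D * (star U * U) := by
    simp only [Matrix.mul_assoc]
  rw [this, hU, Matrix.one_mul, Matrix.mul_one]


/-- Functional calculus for a Hermitian matrix, via the spectral theorem: `g(A)`. -/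
noncomputable def hermApply {n : ℕ} {A : Matrix (Fin n) (Fin n) ℂ} (hA : A.IsHermitian)
    (g : ℝ → ℂ) : Matrix (Fin n) (Fin n) ℂ :=
  (Matrix.IsHermitian.eigenvectorUnitary hA : Matrix (Fin n) (Fin n) ℂ) *
    Matrix.diagonal (g ∘ hA.eigenvalues) *
    star (Matrix.IsHermitian.eigenvectorUnitary hA : Matrix (Fin n) (Fin n) ℂ)

/-- Hilbert–Schmidt operator-Lipschitz estimate. If `g` is Lipschitz with
constant `K` on an interval containing the spectra of the Hermitian matrices `H₀` and
`H₀ + sV` (`s ≥ 0`), then `‖g(H₀ + sV) − g(H₀)‖₂ ≤ s K ‖V‖₂` in the Frobenius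
(Hilbert–Schmidt) norm. -/
theorem stmt_18 {n : ℕ} (H₀ V : Matrix (Fin n) (Fin n) ℂ)
    (hH₀ : H₀.IsHermitian) (hV : V.IsHermitian)
    (s : ℝ) (hs0 : 0 ≤ s) (hs : (H₀ + (s : ℂ) • V).IsHermitian)
    (K : NNReal) (g : ℝ → ℂ) (a b : ℝ)
    (hg : LipschitzOnWith K g (Set.Icc a b))
    (hspec₀ : ∀ i, hH₀.eigenvalues i ∈ Set.Icc a b)
    (hspecs : ∀ i, hs.eigenvalues i ∈ Set.Icc a b) :
    ‖hermApply hs g - hermApply hH₀ g‖ ≤ s * K * ‖V‖ := by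
  set U₁ := (Matrix.IsHermitian.eigenvectorUnitary hs : Matrix (Fin n) (Fin n) ℂ) with hU₁def
  set U₀ := (Matrix.IsHermitian.eigenvectorUnitary hH₀ : Matrix (Fin n) (Fin n) ℂ) with hU₀def
  have hU₁ : star U₁ * U₁ = 1 := Unitary.coe_star_mul_self _
  have hU₁' : U₁ * star U₁ = 1 := Unitary.coe_mul_star_self _
  have hU₀ : star U₀ * U₀ = 1 := Unitary.coe_star_mul_self _
  have hU₀' : U₀ * star U₀ = 1 := Unitary.coe_mul_star_self _
  set B := star U₁ * U₀ with hBdef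
  set lam := hs.eigenvalues with hlam
  set mu := hH₀.eigenvalues with hmu
  set Dg₁ := Matrix.diagonal (g ∘ lam) with hDg₁
  set Dg₀ := Matrix.diagonal (g ∘ mu) with hDg₀
  set Dl := Matrix.diagonal ((RCLike.ofReal : ℝ → ℂ) ∘ lam) with hDl
  set Dm := Matrix.diagonal ((RCLike.ofReal : ℝ → ℂ) ∘ mu) with hDm
  have hA1 : star U₁ * hermApply hs g * U₁ = Dg₁ := sandwich U₁ Dg₁ hU₁
  have hA0 : star U₀ * hermApply hH₀ g * U₀ = Dg₀ := sandwich U₀ Dg₀ hU₀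
  have hH1 : star U₁ * (H₀ + (s : ℂ) • V) * U₁ = Dl := by
    have := hs.conjStarAlgAut_star_eigenvectorUnitary
    rw [Unitary.conjStarAlgAut_star_apply] at this; exact this
  have hH0 : star U₀ * H₀ * U₀ = Dm := by
    have := hH₀.conjStarAlgAut_star_eigenvectorUnitary
    rw [Unitary.conjStarAlgAut_star_apply] at this; exact this
  have EqG : star U₁ * (hermApply hs g - hermApply hH₀ g) * U₀ = Dg₁ * B - B * Dg₀ := by
    rw [Matrix.mul_sub, Matrix.sub_mul, conj_left U₁ U₀ _ _ hU₁' hA1,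
      conj_right U₁ U₀ _ _ hU₀' hA0]
  have EqV : star U₁ * ((s : ℂ) • V) * U₀ = Dl * B - B * Dm := by
    have e : (s : ℂ) • V = (H₀ + (s : ℂ) • V) - H₀ := by abel
    rw [e, Matrix.mul_sub, Matrix.sub_mul, conj_left U₁ U₀ _ _ hU₁' hH1,
      conj_right U₁ U₀ _ _ hU₀' hH0]
  have inv1 : ∀ M : Matrix (Fin n) (Fin n) ℂ, ‖star U₁ * M * U₀‖ = ‖M‖ := by
    intro M
    refine frob_unit_inv (star U₁) U₀ M ?_ hU₀'
    rw [star_star]; exact hU₁'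
  have hent : ∀ i j, ‖(Dg₁ * B - B * Dg₀) i j‖ ≤ (K : ℝ) * ‖(Dl * B - B * Dm) i j‖ := by
    intro i j
    have hco : (RCLike.ofReal : ℝ → ℂ) = Complex.ofReal := rfl
    simp only [hDg₁, hDg₀, hDl, hDm, hco, Matrix.sub_apply, Matrix.diagonal_mul,
      Matrix.mul_diagonal, Function.comp_apply]
    rw [show g (lam i) * B i j - B i j * g (mu j) = (g (lam i) - g (mu j)) * B i j by ring,
      show (Complex.ofReal (lam i)) * B i j - B i j * (Complex.ofReal (mu j))
        = ((lam i - mu j : ℝ) : ℂ) * B i j by push_cast; ring]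
    rw [norm_mul, norm_mul, ← mul_assoc]
    gcongr
    rw [Complex.norm_real, Real.norm_eq_abs]
    have := hg.dist_le_mul (lam i) (hspecs i) (mu j) (hspec₀ j)
    rwa [dist_eq_norm, Real.dist_eq] at this
  have step1 : ‖hermApply hs g - hermApply hH₀ g‖ = ‖Dg₁ * B - B * Dg₀‖ := by
    rw [← EqG, inv1]
  have step2 : ‖Dl * B - B * Dm‖ = ‖(s : ℂ) • V‖ := by rw [← EqV, inv1]
  have step3 : ‖(s : ℂ) • V‖ ≤ s * ‖V‖ := by
    refine frob_le _ _ s hs0 fun i j => le_of_eq ?_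
    simp [Matrix.smul_apply, norm_smul, Complex.norm_real, Real.norm_eq_abs, abs_of_nonneg hs0]
  calc ‖hermApply hs g - hermApply hH₀ g‖ = ‖Dg₁ * B - B * Dg₀‖ := step1
    _ ≤ (K : ℝ) * ‖Dl * B - B * Dm‖ := frob_le _ _ _ K.2 hent
    _ = (K : ℝ) * ‖(s : ℂ) • V‖ := by rw [step2]
    _ ≤ (K : ℝ) * (s * ‖V‖) := mul_le_mul_of_nonneg_left step3 K.2
    _ = s * K * ‖V‖ := by ring
end
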